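/- In any reachable CCSK process, each key occurs at most twice, and if a key occurs twice then it is attached to complementary labels λ[k] and λ̄[k]. -/
import Mathlib


namespace CCSK

/-- Labels: names, co-names, and the silent action τ. -/
inductive Lab : Type
  | name : ℕ → Lab
  | coname : ℕ → Lab
  | tau : Lab
deriving DecidableEq

/-- Complement of a label. -/
def Lab.co : Lab → Lab
  | .name n => .coname n
  | .coname n => .name n
  | .tau => .tau

abbrev Key := ℕ

/-- CCSK processes (with a replication operator for the extended calculus). -/
inductive Proc : Type
  | nil : Proc
  | pre : Lab → Proc → Proc          -- α.X
  | kpre : Lab → Key → Proc → Proc   -- α[k].X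
  | par : Proc → Proc → Proc
  | sum : Proc → Proc → Proc
  | res : Proc → ℕ → Proc            -- X \ a
  | repl : Proc → Proc               -- !X
deriving DecidableEq

/-- Keys occurring in a process. -/
def Proc.keys : Proc → Set Key
  | .nil => ∅
  | .pre _ X => X.keys
  | .kpre _ k X => insert k X.keys
  | .par X Y => X.keys ∪ Y.keys
  | .sum X Y => X.keys ∪ Y.keys
  | .res X _ => X.keys
  | .repl X => X.keys

/-- A process is standard when it contains no keys. -/
def Proc.std (X : Proc) : Prop := X.keys = ∅

/-- Multiset of keyed-prefix occurrences (label, key). -/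
def Proc.keyed : Proc → Multiset (Lab × Key)
  | .nil => 0
  | .pre _ X => X.keyed
  | .kpre a k X => (a, k) ::ₘ X.keyed
  | .par X Y => X.keyed + Y.keyed
  | .sum X Y => X.keyed + Y.keyed
  | .res X _ => X.keyed
  | .repl X => X.keyed

/-- Enhanced keyed labels. -/
inductive ELab : Type
  | base : Lab → Key → ELab          -- α[k]
  | parL : ELab → ELab               -- |_L θ
  | parR : ELab → ELab               -- |_R θ
  | bang : ELab → ELab               -- !θ (replication)
  | syn : ELab → ELab → ELab         -- ⟨θ_L, θ_R⟩
deriving DecidableEq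

/-- Underlying action label ℓ(θ). -/
def ELab.act : ELab → Lab
  | .base a _ => a
  | .parL θ => θ.act
  | .parR θ => θ.act
  | .bang θ => θ.act
  | .syn _ _ => .tau

/-- Key of an enhanced keyed label. -/
def ELab.key : ELab → Key
  | .base _ k => k
  | .parL θ => θ.key
  | .parR θ => θ.key
  | .bang θ => θ.key
  | .syn θ _ => θ.key

/-- Dependency relation ⋖ on enhanced keyed labels (including the extension
for replication labels). -/
inductive Dep : ELab → ELab → Prop
  | base (a : Lab) (k : Key) (θ : ELab) : Dep (.base a k) θ
  | parL {θ θ'} : Dep θ θ' → Dep (.parL θ) (.parL θ')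
  | parR {θ θ'} : Dep θ θ' → Dep (.parR θ) (.parR θ')
  | synSrcL {θL θR θ} : Dep θL θ → Dep (.syn θL θR) θ
  | synSrcR {θL θR θ} : Dep θR θ → Dep (.syn θL θR) θ
  | synTgtL {θ θL θR} : Dep θ θL → Dep θ (.syn θL θR)
  | synTgtR {θ θL θR} : Dep θ θR → Dep θ (.syn θL θR)
  | synSynL {θL θR θL' θR'} : Dep θL θL' → Dep (.syn θL θR) (.syn θL' θR')
  | synSynR {θL θR θL' θR'} : Dep θR θR' → Dep (.syn θL θR) (.syn θL' θR')
  | bangBang (θ : ELab) : Dep (.bang θ) (.bang θ)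
  | bangParL (θ θ' : ELab) : Dep (.bang θ) (.parL θ')
  | bangParRSynL (θL θR θ'' : ELab) : Dep (.bang (.syn θL θR)) (.parR (.parL θ''))
  | bangParRSynR (θL θR θ'' : ELab) : Dep (.bang (.syn θL θR)) (.parR (.parR θ''))
  | bangParR {θ θ' : ELab} : Dep θ θ' → Dep (.bang θ) (.parR θ')

/-- Concurrency of labels: no dependency in either direction. -/
def Conc (θ₁ θ₂ : ELab) : Prop := ¬ Dep θ₁ θ₂ ∧ ¬ Dep θ₂ θ₁

/-- The proved forward LTS for CCSK (without replication rules). -/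
inductive Fwd : Proc → ELab → Proc → Prop
  | act {a k X} : Proc.std X → Fwd (.pre a X) (.base a k) (.kpre a k X)
  | pre {a : Lab} {k : Key} {X X' : Proc} {θ : ELab} : Fwd X θ X' → θ.key ≠ k →
      Fwd (.kpre a k X) θ (.kpre a k X')
  | res {X X' : Proc} {θ : ELab} {a : ℕ} : Fwd X θ X' → θ.act ≠ .name a → θ.act ≠ .coname a →
      Fwd (X.res a) θ (X'.res a)
  | parL {X X' Y : Proc} {θ : ELab} : Fwd X θ X' → θ.key ∉ Y.keys →
      Fwd (X.par Y) (.parL θ) (X'.par Y)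
  | parR {Y Y' X : Proc} {θ : ELab} : Fwd Y θ Y' → θ.key ∉ X.keys →
      Fwd (X.par Y) (.parR θ) (X.par Y')
  | syn {X X' Y Y' : Proc} {θ₁ θ₂ : ELab} : Fwd X θ₁ X' → Fwd Y θ₂ Y' →
      θ₁.act ≠ .tau → θ₂.act = θ₁.act.co → θ₂.key = θ₁.key →
      Fwd (X.par Y) (.syn (.parL θ₁) (.parR θ₂)) (X'.par Y')
  | sumL {X θ X' Y} : Fwd X θ X' → Proc.std Y → Fwd (X.sum Y) θ (X'.sum Y)
  | sumR {Y θ Y' X} : Fwd Y θ Y' → Proc.std X → Fwd (X.sum Y) θ (X.sum Y')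

/-- The proved backward LTS for CCSK (exact symmetric of the forward one).
`Bwd X θ Y` means `X ⇝[θ] Y`. -/
inductive Bwd : Proc → ELab → Proc → Prop
  | act {a k X} : Proc.std X → Bwd (.kpre a k X) (.base a k) (.pre a X)
  | pre {a : Lab} {k : Key} {X' X : Proc} {θ : ELab} : Bwd X' θ X → θ.key ≠ k →
      Bwd (.kpre a k X') θ (.kpre a k X)
  | res {X' X : Proc} {θ : ELab} {a : ℕ} : Bwd X' θ X → θ.act ≠ .name a → θ.act ≠ .coname a →
      Bwd (X'.res a) θ (X.res a)
  | parL {X' X Y : Proc} {θ : ELab} : Bwd X' θ X → θ.key ∉ Y.keys →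
      Bwd (X'.par Y) (.parL θ) (X.par Y)
  | parR {Y' Y X : Proc} {θ : ELab} : Bwd Y' θ Y → θ.key ∉ X.keys →
      Bwd (X.par Y') (.parR θ) (X.par Y)
  | syn {X' X Y' Y : Proc} {θ₁ θ₂ : ELab} : Bwd X' θ₁ X → Bwd Y' θ₂ Y →
      θ₁.act ≠ .tau → θ₂.act = θ₁.act.co → θ₂.key = θ₁.key →
      Bwd (X'.par Y') (.syn (.parL θ₁) (.parR θ₂)) (X.par Y)
  | sumL {X' θ X Y} : Bwd X' θ X → Proc.std Y → Bwd (X'.sum Y) θ (X.sum Y)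
  | sumR {Y' θ Y X} : Bwd Y' θ Y → Proc.std X → Bwd (X.sum Y') θ (X.sum Y)

/-- Combined LTS: `Step true` is forward, `Step false` is backward. -/
def Step : Bool → Proc → ELab → Proc → Prop
  | true => Fwd
  | false => Bwd

/-- Reachability: connected to a standard process by forward/backward moves. -/
def Reachable (X : Proc) : Prop :=
  ∃ X₀ : Proc, X₀.std ∧
    Relation.ReflTransGen (fun A B => ∃ d θ, Step d A θ B) X₀ X

/-- The proved forward LTS for CCSK extended with replication. -/
inductive FwdR : Proc → ELab → Proc → Prop
  | act {a k X} : Proc.std X → FwdR (.pre a X) (.base a k) (.kpre a k X)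
  | pre {a : Lab} {k : Key} {X X' : Proc} {θ : ELab} : FwdR X θ X' → θ.key ≠ k →
      FwdR (.kpre a k X) θ (.kpre a k X')
  | res {X X' : Proc} {θ : ELab} {a : ℕ} : FwdR X θ X' → θ.act ≠ .name a → θ.act ≠ .coname a →
      FwdR (X.res a) θ (X'.res a)
  | parL {X X' Y : Proc} {θ : ELab} : FwdR X θ X' → θ.key ∉ Y.keys →
      FwdR (X.par Y) (.parL θ) (X'.par Y)
  | parR {Y Y' X : Proc} {θ : ELab} : FwdR Y θ Y' → θ.key ∉ X.keys →
      FwdR (X.par Y) (.parR θ) (X.par Y')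
  | syn {X X' Y Y' : Proc} {θ₁ θ₂ : ELab} : FwdR X θ₁ X' → FwdR Y θ₂ Y' →
      θ₁.act ≠ .tau → θ₂.act = θ₁.act.co → θ₂.key = θ₁.key →
      FwdR (X.par Y) (.syn (.parL θ₁) (.parR θ₂)) (X'.par Y')
  | sumL {X θ X' Y} : FwdR X θ X' → Proc.std Y → FwdR (X.sum Y) θ (X'.sum Y)
  | sumR {Y θ Y' X} : FwdR Y θ Y' → Proc.std X → FwdR (X.sum Y) θ (X.sum Y')
  | repl1 {X X' : Proc} {θ : ELab} : FwdR X θ X' →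
      FwdR (.repl X) (.bang θ) ((Proc.repl X).par X')
  | repl2 {X X' X'' : Proc} {θ₁ θ₂ : ELab} : FwdR X θ₁ X' → FwdR X θ₂ X'' →
      θ₁.act ≠ .tau → θ₂.act = θ₁.act.co → θ₂.key = θ₁.key →
      FwdR (.repl X) (.bang (.syn (.parL θ₁) (.parR θ₂)))
        ((Proc.repl X).par (X'.par X''))

/-- The proved backward LTS for CCSK extended with replication. -/
inductive BwdR : Proc → ELab → Proc → Prop
  | act {a k X} : Proc.std X → BwdR (.kpre a k X) (.base a k) (.pre a X)
  | pre {a : Lab} {k : Key} {X' X : Proc} {θ : ELab} : BwdR X' θ X → θ.key ≠ k →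
      BwdR (.kpre a k X') θ (.kpre a k X)
  | res {X' X : Proc} {θ : ELab} {a : ℕ} : BwdR X' θ X → θ.act ≠ .name a → θ.act ≠ .coname a →
      BwdR (X'.res a) θ (X.res a)
  | parL {X' X Y : Proc} {θ : ELab} : BwdR X' θ X → θ.key ∉ Y.keys →
      BwdR (X'.par Y) (.parL θ) (X.par Y)
  | parR {Y' Y X : Proc} {θ : ELab} : BwdR Y' θ Y → θ.key ∉ X.keys →
      BwdR (X.par Y') (.parR θ) (X.par Y)
  | syn {X' X Y' Y : Proc} {θ₁ θ₂ : ELab} : BwdR X' θ₁ X → BwdR Y' θ₂ Y →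
      θ₁.act ≠ .tau → θ₂.act = θ₁.act.co → θ₂.key = θ₁.key →
      BwdR (X'.par Y') (.syn (.parL θ₁) (.parR θ₂)) (X.par Y)
  | sumL {X' θ X Y} : BwdR X' θ X → Proc.std Y → BwdR (X'.sum Y) θ (X.sum Y)
  | sumR {Y' θ Y X} : BwdR Y' θ Y → Proc.std X → BwdR (X.sum Y') θ (X.sum Y)
  | repl1 {X' X : Proc} {θ : ELab} : BwdR X' θ X →
      BwdR ((Proc.repl X).par X') (.bang θ) (.repl X)
  | repl2 {X' X'' X : Proc} {θ₁ θ₂ : ELab} : BwdR X' θ₁ X → BwdR X'' θ₂ X →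
      θ₁.act ≠ .tau → θ₂.act = θ₁.act.co → θ₂.key = θ₁.key →
      BwdR ((Proc.repl X).par (X'.par X''))
        (.bang (.syn (.parL θ₁) (.parR θ₂))) (.repl X)

/-- Combined extended LTS. -/
def StepR : Bool → Proc → ELab → Proc → Prop
  | true => FwdR
  | false => BwdR

/-- Reachability in the extended calculus. -/
def ReachableR (X : Proc) : Prop :=
  ∃ X₀ : Proc, X₀.std ∧
    Relation.ReflTransGen (fun A B => ∃ d θ, StepR d A θ B) X₀ X

/-- Traces: sequences of composable (forward or backward) transitions. -/
inductive Trace : Proc → Proc → Type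
  | nil (X : Proc) : Trace X X
  | cons {X Y Z : Proc} (d : Bool) (θ : ELab) (s : Step d X θ Y)
      (T : Trace Y Z) : Trace X Z

/-- Composition of traces. -/
def Trace.comp : {X Y Z : Proc} → Trace X Y → Trace Y Z → Trace X Z
  | _, _, _, .nil _, U => U
  | _, _, _, .cons d θ s T, U => .cons d θ s (Trace.comp T U)

/-- Length of a trace. -/
def Trace.length : {X Y : Proc} → Trace X Y → ℕ
  | _, _, .nil _ => 0
  | _, _, .cons _ _ _ T => Trace.length T + 1

/-- All transitions of a trace have direction `d`. -/
def Trace.AllDir (d : Bool) : {X Y : Proc} → Trace X Y → Prop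
  | _, _, .nil _ => True
  | _, _, .cons d' _ _ T => d' = d ∧ Trace.AllDir d T

/-- Causal equivalence of traces: the least equivalence relation, closed under
composition, cancelling a transition followed by its reverse, and swapping the
two sides of a concurrency square. -/
inductive CEq : {X Y : Proc} → Trace X Y → Trace X Y → Prop
  | refl {X Y} (T : Trace X Y) : CEq T T
  | symm {X Y} {T T' : Trace X Y} : CEq T T' → CEq T' T
  | trans {X Y} {T T' T'' : Trace X Y} : CEq T T' → CEq T' T'' → CEq T T''
  | congr {X Y Z : Proc} {d θ} (s : Step d X θ Y) {T T' : Trace Y Z} :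
      CEq T T' → CEq (Trace.cons d θ s T) (Trace.cons d θ s T')
  | cancel {X Y Z : Proc} {d θ} (s : Step d X θ Y) (s' : Step (!d) Y θ X)
      (T : Trace X Z) :
      CEq (Trace.cons d θ s (Trace.cons (!d) θ s' T)) T
  | square {X X₁ X₂ Y Z : Proc} {d₁ d₂ θ₁ θ₂}
      (s₁ : Step d₁ X θ₁ X₁) (t₂ : Step d₂ X₁ θ₂ Y)
      (s₂ : Step d₂ X θ₂ X₂) (t₁ : Step d₁ X₂ θ₁ Y)
      (hc : Conc θ₁ θ₂) (T : Trace Y Z) :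
      CEq (Trace.cons d₁ θ₁ s₁ (Trace.cons d₂ θ₂ t₂ T))
          (Trace.cons d₂ θ₂ s₂ (Trace.cons d₁ θ₁ t₁ T))

/-- Removal of the keyed prefix α[k]. -/
def remP (a : Lab) (k : Key) : Proc → Proc
  | .nil => .nil
  | .pre b X => .pre b X
  | .kpre b m X => if b = a ∧ m = k then X else .kpre b m (remP a k X)
  | .par X Y => .par (remP a k X) (remP a k Y)
  | .sum X Y => .sum (remP a k X) (remP a k Y)
  | .res X n => .res (remP a k X) n
  | .repl X => .repl (remP a k X)

/-- rem_k^α : remove α[k] and its complement (only α[k] when α = τ). -/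
def remK (a : Lab) (k : Key) (X : Proc) : Proc :=
  if a = Lab.tau then remP a k X else remP a k (remP a.co k X)

/-- Left projection of enhanced keyed labels (partial). -/
def projL : ELab → Option ELab
  | .parL θ => some θ
  | .syn (.parL θL) _ => some θL
  | _ => none

/-- Right projection of enhanced keyed labels (partial). -/
def projR : ELab → Option ELab
  | .parR θ => some θ
  | .syn _ (.parR θR) => some θR
  | _ => none

/-- Projection selector: `true` is left, `false` is right. -/
def eproj : Bool → ELab → Option ELab
  | true => projL
  | false => projR

/-- Component selector for parallel processes. -/
def side (b : Bool) (L R : Proc) : Proc := if b then L else R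

/-- Labels of the shapes arising from a parallel composition. -/
def ParShape (θ : ELab) : Prop :=
  (∃ φ, θ = ELab.parL φ) ∨ (∃ φ, θ = ELab.parR φ) ∨
    ∃ φ ψ, θ = ELab.syn (ELab.parL φ) (ELab.parR ψ)

/-- The collapsing function σ identifying ! and |_R prefixes. -/
def collapse : ELab → ELab
  | .base a k => .base a k
  | .parL θ => .parL (collapse θ)
  | .parR θ => .parR (collapse θ)
  | .bang θ => .parR (collapse θ)
  | .syn θ₁ θ₂ => .syn (collapse θ₁) (collapse θ₂)

/-- Sub-term relation: strips sums, restrictions and executed keyed prefixes.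
`Strip X Y` means X is a sub-term of Y. -/
inductive Strip : Proc → Proc → Prop
  | refl (X : Proc) : Strip X X
  | sumL {X Y Z : Proc} : Strip X Y → Strip X (Y.sum Z)
  | sumR {X Y Z : Proc} : Strip X Y → Strip X (Z.sum Y)
  | res {X Y : Proc} {a : ℕ} : Strip X Y → Strip X (Y.res a)
  | kpre {X Y : Proc} {a : Lab} {k : Key} : Strip X Y → Strip X (.kpre a k Y)

/-- A forward transition of the proved LTS, as an object. -/
structure FTrans where
  src : Proc
  lab : ELab
  tgt : Proc
  ok : Fwd src lab tgt

/-- A backward transition of the proved LTS, as an object. -/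
structure BTrans where
  src : Proc
  lab : ELab
  tgt : Proc
  ok : Bwd src lab tgt

end CCSK

namespace CCSKAux
open CCSK

/-- Multiset of base (label,key) pairs occurring in an enhanced label. -/
def basis : ELab → Multiset (Lab × Key)
  | .base a k => {(a, k)}
  | .parL θ => basis θ
  | .parR θ => basis θ
  | .bang θ => basis θ
  | .syn θ₁ θ₂ => basis θ₁ + basis θ₂

lemma keyed_key_mem_keys : ∀ (X : Proc) (p : Lab × Key), p ∈ X.keyed → p.2 ∈ X.keys := by
  intro X
  induction X with
  | nil => simp [Proc.keyed]
  | pre a X ih => simpa [Proc.keyed, Proc.keys] using ih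
  | kpre a k X ih =>
      intro p hp
      simp only [Proc.keyed, Multiset.mem_cons] at hp
      rcases hp with h | h
      · subst h; simp [Proc.keys]
      · exact Set.mem_insert_iff.mpr (Or.inr (ih p h))
  | par X Y ihX ihY =>
      intro p hp
      simp only [Proc.keyed, Multiset.mem_add] at hp
      rcases hp with h | h
      · exact Set.mem_union_left _ (ihX p h)
      · exact Set.mem_union_right _ (ihY p h)
  | sum X Y ihX ihY =>
      intro p hp
      simp only [Proc.keyed, Multiset.mem_add] at hp
      rcases hp with h | h
      · exact Set.mem_union_left _ (ihX p h)
      · exact Set.mem_union_right _ (ihY p h)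
  | res X a ih => simpa [Proc.keyed, Proc.keys] using ih
  | repl X ih => simpa [Proc.keyed, Proc.keys] using ih

lemma std_keyed {X : Proc} (h : X.std) : X.keyed = 0 := by
  refine Multiset.eq_zero_of_forall_notMem ?_
  intro p hp
  have := keyed_key_mem_keys X p hp
  rw [Proc.std] at h
  simp [h] at this

lemma fwd_keyed {X θ X'} (h : Fwd X θ X') : X'.keyed = X.keyed + basis θ := by
  induction h with
  | act hstd => simp [Proc.keyed, basis, std_keyed hstd]
  | pre _ _ ih => simp [Proc.keyed, ih, Multiset.cons_add]
  | res _ _ _ ih => simpa [Proc.keyed] using ih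
  | parL _ _ ih => simp [Proc.keyed, basis, ih]; abel
  | parR _ _ ih => simp [Proc.keyed, basis, ih]; abel
  | syn h1 h2 _ _ _ ih1 ih2 => simp [Proc.keyed, basis, ih1, ih2]; abel
  | sumL _ _ ih => simp [Proc.keyed, ih]; abel
  | sumR _ _ ih => simp [Proc.keyed, ih]; abel

lemma bwd_keyed {X' θ X} (h : Bwd X' θ X) : X'.keyed = X.keyed + basis θ := by
  induction h with
  | act hstd => simp [Proc.keyed, basis, std_keyed hstd]
  | pre _ _ ih => simp [Proc.keyed, ih, Multiset.cons_add]
  | res _ _ _ ih => simpa [Proc.keyed] using ih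
  | parL _ _ ih => simp [Proc.keyed, basis, ih]; abel
  | parR _ _ ih => simp [Proc.keyed, basis, ih]; abel
  | syn h1 h2 _ _ _ ih1 ih2 => simp [Proc.keyed, basis, ih1, ih2]; abel
  | sumL _ _ ih => simp [Proc.keyed, ih]; abel
  | sumR _ _ ih => simp [Proc.keyed, ih]; abel

lemma co_ne_tau {a : Lab} (h : a ≠ Lab.tau) : a.co ≠ Lab.tau := by
  cases a <;> simp [Lab.co] at *

lemma fwd_basis {X θ X'} (h : Fwd X θ X') :
    basis θ = {(θ.act, θ.key)} ∨
    (θ.act = Lab.tau ∧ ∃ a, a ≠ Lab.tau ∧ basis θ = {(a, θ.key), (a.co, θ.key)}) := by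
  induction h with
  | act _ => left; rfl
  | pre _ _ ih => exact ih
  | res _ _ _ ih => exact ih
  | parL _ _ ih => simpa [basis, ELab.act, ELab.key] using ih
  | parR _ _ ih => simpa [basis, ELab.act, ELab.key] using ih
  | syn h1 h2 hτ hco hk ih1 ih2 =>
      right
      refine ⟨rfl, ?_⟩
      rcases ih1 with b1 | ⟨ht, _⟩
      swap
      · exact absurd ht hτ
      rcases ih2 with b2 | ⟨ht, _⟩
      swap
      · rw [hco] at ht; exact absurd ht (co_ne_tau hτ)
      refine ⟨_, hτ, ?_⟩
      simp only [basis, ELab.act, ELab.key, b1, b2, hco, hk]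
      rfl
  | sumL _ _ ih => exact ih
  | sumR _ _ ih => exact ih

lemma fwd_key_notMem {X θ X'} (h : Fwd X θ X') : θ.key ∉ X.keys := by
  induction h with
  | act hstd => rw [Proc.std] at hstd; simp [Proc.keys, hstd]
  | pre _ hk ih =>
      simp only [Proc.keys, Set.mem_insert_iff]
      rintro (h | h)
      · exact hk h
      · exact ih h
  | res _ _ _ ih => simpa [Proc.keys] using ih
  | parL _ hY ih =>
      simp only [Proc.keys, ELab.key, Set.mem_union]
      rintro (h | h)
      · exact ih h
      · exact hY h
  | parR _ hX ih =>
      simp only [Proc.keys, ELab.key, Set.mem_union]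
      rintro (h | h)
      · exact hX h
      · exact ih h
  | syn h1 h2 hτ hco hk ih1 ih2 =>
      simp only [Proc.keys, ELab.key, Set.mem_union]
      rintro (h | h)
      · exact ih1 h
      · rw [← hk] at h; exact ih2 h
  | sumL _ hstd ih =>
      rw [Proc.std] at hstd
      simpa [Proc.keys, hstd] using ih
  | sumR _ hstd ih =>
      rw [Proc.std] at hstd
      simpa [Proc.keys, hstd] using ih

lemma basis_key {X θ X'} (h : Fwd X θ X') : ∀ p ∈ basis θ, p.2 = θ.key := by
  rcases fwd_basis h with hb | ⟨_, a, _, hb⟩ <;> rw [hb] <;> intro p hp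
  · simp at hp; subst hp; rfl
  · rcases Multiset.mem_cons.mp hp with h | h
    · subst h; rfl
    · simp at h; subst h; rfl

/-- The invariant. -/
def Inv (X : Proc) : Prop :=
  ∀ k : Key,
    (Multiset.filter (fun p => p.2 = k) X.keyed).card ≤ 2 ∧
    ((Multiset.filter (fun p => p.2 = k) X.keyed).card = 2 →
      ∃ l : Lab, l ≠ Lab.tau ∧
        Multiset.filter (fun p => p.2 = k) X.keyed = {(l, k), (l.co, k)})

lemma inv_fwd {X θ X'} (h : Fwd X θ X') (hI : Inv X) : Inv X' := by
  intro k
  rw [fwd_keyed h, Multiset.filter_add]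
  by_cases hk : θ.key = k
  · -- old part filters to 0, new part is the whole basis
    have h0 : Multiset.filter (fun p => p.2 = k) X.keyed = 0 := by
      rw [Multiset.filter_eq_nil]
      intro p hp hpk
      exact fwd_key_notMem h (by rw [hk, ← hpk]; exact keyed_key_mem_keys X p hp)
    have hbf : Multiset.filter (fun p => p.2 = k) (basis θ) = basis θ :=
      Multiset.filter_eq_self.mpr (fun p hp => by rw [basis_key h p hp, hk])
    rw [h0, hbf, zero_add]
    rcases fwd_basis h with hb | ⟨_, a, ha, hb⟩
    · rw [hb]; constructor
      · simp
      · intro hc; simp at hc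
    · rw [hb, hk]; constructor
      · simp
      · intro _; exact ⟨a, ha, rfl⟩
  · have hbf : Multiset.filter (fun p => p.2 = k) (basis θ) = 0 := by
      rw [Multiset.filter_eq_nil]
      intro p hp hpk
      exact hk (by rw [← basis_key h p hp, hpk])
    rw [hbf, add_zero]
    exact hI k

lemma inv_bwd {X' θ X} (h : Bwd X' θ X) (hI : Inv X') : Inv X := by
  intro k
  have hkeq := bwd_keyed h
  obtain ⟨hc, hp⟩ := hI k
  rw [hkeq, Multiset.filter_add, Multiset.card_add] at hc hp
  constructor
  · omega
  · intro h2
    have hb0 : (Multiset.filter (fun p => p.2 = k) (basis θ)).card = 0 := by omega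
    rw [Multiset.card_eq_zero] at hb0
    have := hp (by omega)
    rwa [hb0, add_zero] at this

lemma inv_reachable {X : Proc} (h : Reachable X) : Inv X := by
  obtain ⟨X₀, hstd, hR⟩ := h
  have h0 : Inv X₀ := by
    intro k
    rw [std_keyed hstd]
    simp
  induction hR with
  | refl => exact h0
  | tail _ hstep ih =>
      obtain ⟨d, θ, hs⟩ := hstep
      cases d
      · exact inv_bwd hs ih
      · exact inv_fwd hs ih

end CCSKAux

open CCSK in
/-- In a reachable CCSK process every key occurs at most twice, and a key
occurring twice is attached to complementary labels λ[k] and λ̄[k]. -/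
theorem keys_at_most_twice_complementary : ∀ X : Proc, Reachable X →
    ∀ k : Key,
      (Multiset.filter (fun p => p.2 = k) X.keyed).card ≤ 2 ∧
      ((Multiset.filter (fun p => p.2 = k) X.keyed).card = 2 →
        ∃ l : Lab, l ≠ Lab.tau ∧
          Multiset.filter (fun p => p.2 = k) X.keyed = {(l, k), (l.co, k)}) := by
  intro X hX k
  exact CCSKAux.inv_reachable hX k
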